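/- Let G be a finite graph on k vertices, i a vertex with degree n_i, and j a fixed neighbor of i. Then for each r ∈ {1, …, n_i}, the number of permutations π of the vertices such that exactly r neighbors of i precede i and j is among them equals r·k!/(n_i(n_i+1)). -/

import Mathlib

open Finset
open scoped Classical

namespace DagarAux

open Equiv

variable {k : ℕ}

def before (i : Fin k) (N : Finset (Fin k)) (π : Equiv.Perm (Fin k)) : Finset (Fin k) :=
  N.filter (fun u => π.symm u < π.symm i)

def after (i : Fin k) (N : Finset (Fin k)) (π : Equiv.Perm (Fin k)) : Finset (Fin k) :=
  N.filter (fun u => π.symm i < π.symm u)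

def cnt (i : Fin k) (N : Finset (Fin k)) (π : Equiv.Perm (Fin k)) : ℕ := (before i N π).card

lemma symm_mul (σ π : Equiv.Perm (Fin k)) (w : Fin k) :
    (σ * π).symm w = π.symm (σ.symm w) := rfl

lemma ne_i {i : Fin k} {N : Finset (Fin k)} (hi : i ∉ N) {u : Fin k} (hu : u ∈ N) : u ≠ i := by
  rintro rfl; exact hi hu

noncomputable def fwd (i : Fin k) (N : Finset (Fin k)) (π : Equiv.Perm (Fin k)) :
    Equiv.Perm (Fin k) :=
  if h : (after i N π).Nonempty then
    Equiv.swap i (π (((after i N π).image π.symm).min' (h.image _))) * π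
  else π

noncomputable def bwd (i : Fin k) (N : Finset (Fin k)) (π : Equiv.Perm (Fin k)) :
    Equiv.Perm (Fin k) :=
  if h : (before i N π).Nonempty then
    Equiv.swap i (π (((before i N π).image π.symm).max' (h.image _))) * π
  else π

lemma fwd_char (i : Fin k) (N : Finset (Fin k)) (π : Equiv.Perm (Fin k)) (u : Fin k)
    (hu : u ∈ after i N π) (hmin : ∀ w ∈ after i N π, π.symm u ≤ π.symm w) :
    fwd i N π = Equiv.swap i u * π := by
  have h : (after i N π).Nonempty := ⟨u, hu⟩
  rw [fwd, dif_pos h]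
  have hmin' : ((after i N π).image π.symm).min' (h.image _) = π.symm u := by
    apply le_antisymm
    · exact Finset.min'_le _ _ (Finset.mem_image_of_mem _ hu)
    · apply Finset.le_min'
      intro y hy
      obtain ⟨w, hw, rfl⟩ := Finset.mem_image.mp hy
      exact hmin w hw
  rw [hmin', Equiv.apply_symm_apply]

lemma bwd_char (i : Fin k) (N : Finset (Fin k)) (π : Equiv.Perm (Fin k)) (u : Fin k)
    (hu : u ∈ before i N π) (hmax : ∀ w ∈ before i N π, π.symm w ≤ π.symm u) :
    bwd i N π = Equiv.swap i u * π := by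
  have h : (before i N π).Nonempty := ⟨u, hu⟩
  rw [bwd, dif_pos h]
  have hmax' : ((before i N π).image π.symm).max' (h.image _) = π.symm u := by
    apply le_antisymm
    · apply Finset.max'_le
      intro y hy
      obtain ⟨w, hw, rfl⟩ := Finset.mem_image.mp hy
      exact hmax w hw
    · exact Finset.le_max' _ _ (Finset.mem_image_of_mem _ hu)
  rw [hmax', Equiv.apply_symm_apply]

lemma before_swap_min {i : Fin k} {N : Finset (Fin k)} (hi : i ∉ N) {π : Equiv.Perm (Fin k)}
    {u : Fin k} (hu : u ∈ after i N π) (hmin : ∀ w ∈ after i N π, π.symm u ≤ π.symm w) :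
    before i N (Equiv.swap i u * π) = insert u (before i N π) := by
  obtain ⟨huN, hugt⟩ := Finset.mem_filter.mp hu
  have hui : u ≠ i := ne_i hi huN
  have hs : ∀ w, (Equiv.swap i u * π).symm w = π.symm (Equiv.swap i u w) := by
    intro w; rw [symm_mul, Equiv.symm_swap]
  ext w
  rw [before, before, Finset.mem_filter, Finset.mem_insert, Finset.mem_filter,
    hs w, hs i, Equiv.swap_apply_left]
  by_cases hwu : w = u
  · subst hwu
    rw [Equiv.swap_apply_right]
    simp [huN, hugt]
  by_cases hwi : w = i
  · subst hwi
    rw [Equiv.swap_apply_left]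
    simp [hi, Ne.symm hui]
  · rw [Equiv.swap_apply_of_ne_of_ne hwi hwu]
    constructor
    · rintro ⟨hwN, hlt⟩
      refine Or.inr ⟨hwN, ?_⟩
      rcases lt_trichotomy ((π.symm) w) ((π.symm) i) with h | h | h
      · exact h
      · exact absurd (π.symm.injective h) hwi
      · exact absurd hlt (not_lt.mpr (hmin w (Finset.mem_filter.mpr ⟨hwN, h⟩)))
    · rintro (rfl | ⟨hwN, hlt⟩)
      · exact absurd rfl hwu
      · exact ⟨hwN, hlt.trans hugt⟩

lemma before_swap_max {i : Fin k} {N : Finset (Fin k)} (hi : i ∉ N) {π : Equiv.Perm (Fin k)}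
    {u : Fin k} (hu : u ∈ before i N π) (hmax : ∀ w ∈ before i N π, π.symm w ≤ π.symm u) :
    before i N (Equiv.swap i u * π) = (before i N π).erase u := by
  obtain ⟨huN, hult⟩ := Finset.mem_filter.mp hu
  have hui : u ≠ i := ne_i hi huN
  have hs : ∀ w, (Equiv.swap i u * π).symm w = π.symm (Equiv.swap i u w) := by
    intro w; rw [symm_mul, Equiv.symm_swap]
  ext w
  rw [before, before, Finset.mem_filter, Finset.mem_erase, Finset.mem_filter,
    hs w, hs i, Equiv.swap_apply_left]
  by_cases hwu : w = u
  · subst hwu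
    rw [Equiv.swap_apply_right]
    simp [asymm hult]
  by_cases hwi : w = i
  · subst hwi
    rw [Equiv.swap_apply_left]
    simp [hi]
  · rw [Equiv.swap_apply_of_ne_of_ne hwi hwu]
    constructor
    · rintro ⟨hwN, hlt⟩
      exact ⟨hwu, hwN, hlt.trans hult⟩
    · rintro ⟨-, hwN, hlt⟩
      refine ⟨hwN, ?_⟩
      have := hmax w (Finset.mem_filter.mpr ⟨hwN, hlt⟩)
      exact lt_of_le_of_ne this (fun h => hwu (π.symm.injective h))

lemma cnt_fwd {i : Fin k} {N : Finset (Fin k)} (hi : i ∉ N) {π : Equiv.Perm (Fin k)}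
    (h : (after i N π).Nonempty) : cnt i N (fwd i N π) = cnt i N π + 1 := by
  obtain ⟨u, hu, hmin⟩ := Finset.exists_min_image (after i N π) (fun w => π.symm w) h
  rw [fwd_char i N π u hu hmin, cnt, before_swap_min hi hu hmin,
    Finset.card_insert_of_notMem, cnt]
  intro hmem
  exact absurd (Finset.mem_filter.mp hmem).2 (asymm (Finset.mem_filter.mp hu).2)

lemma cnt_bwd {i : Fin k} {N : Finset (Fin k)} (hi : i ∉ N) {π : Equiv.Perm (Fin k)}
    (h : (before i N π).Nonempty) : cnt i N (bwd i N π) + 1 = cnt i N π := by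
  obtain ⟨u, hu, hmax⟩ := Finset.exists_max_image (before i N π) (fun w => π.symm w) h
  rw [bwd_char i N π u hu hmax, cnt, before_swap_max hi hu hmax,
    Finset.card_erase_of_mem hu, cnt]
  have : 0 < (before i N π).card := Finset.card_pos.mpr ⟨u, hu⟩
  omega

lemma bwd_fwd {i : Fin k} {N : Finset (Fin k)} (hi : i ∉ N) {π : Equiv.Perm (Fin k)}
    (h : (after i N π).Nonempty) : bwd i N (fwd i N π) = π := by
  obtain ⟨u, hu, hmin⟩ := Finset.exists_min_image (after i N π) (fun w => π.symm w) h
  obtain ⟨huN, hugt⟩ := Finset.mem_filter.mp hu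
  have hui : u ≠ i := ne_i hi huN
  rw [fwd_char i N π u hu hmin]
  set π' := Equiv.swap i u * π with hπ'
  have hs : ∀ w, π'.symm w = π.symm (Equiv.swap i u w) := by
    intro w; rw [hπ', symm_mul, Equiv.symm_swap]
  have hπ'u : π'.symm u = π.symm i := by rw [hs, Equiv.swap_apply_right]
  have hπ'i : π'.symm i = π.symm u := by rw [hs, Equiv.swap_apply_left]
  have hu' : u ∈ before i N π' := by
    rw [before, Finset.mem_filter, hπ'u, hπ'i]
    exact ⟨huN, hugt⟩
  have hmax' : ∀ w ∈ before i N π', π'.symm w ≤ π'.symm u := by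
    intro w hw
    rw [before_swap_min hi hu hmin] at hw
    rcases Finset.mem_insert.mp hw with rfl | hw
    · exact le_refl _
    · obtain ⟨hwN, hwlt⟩ := Finset.mem_filter.mp hw
      have hwu : w ≠ u := fun h => absurd (h ▸ hwlt) (asymm hugt)
      have hwi : w ≠ i := ne_i hi hwN
      rw [hs, Equiv.swap_apply_of_ne_of_ne hwi hwu, hπ'u]
      exact le_of_lt hwlt
  rw [bwd_char i N π' u hu' hmax', hπ', ← mul_assoc, Equiv.swap_mul_self, one_mul]

lemma fwd_bwd {i : Fin k} {N : Finset (Fin k)} (hi : i ∉ N) {π : Equiv.Perm (Fin k)}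
    (h : (before i N π).Nonempty) : fwd i N (bwd i N π) = π := by
  obtain ⟨u, hu, hmax⟩ := Finset.exists_max_image (before i N π) (fun w => π.symm w) h
  obtain ⟨huN, hult⟩ := Finset.mem_filter.mp hu
  have hui : u ≠ i := ne_i hi huN
  rw [bwd_char i N π u hu hmax]
  set π' := Equiv.swap i u * π with hπ'
  have hs : ∀ w, π'.symm w = π.symm (Equiv.swap i u w) := by
    intro w; rw [hπ', symm_mul, Equiv.symm_swap]
  have hπ'u : π'.symm u = π.symm i := by rw [hs, Equiv.swap_apply_right]
  have hπ'i : π'.symm i = π.symm u := by rw [hs, Equiv.swap_apply_left]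
  have hu' : u ∈ after i N π' := by
    rw [after, Finset.mem_filter, hπ'u, hπ'i]
    exact ⟨huN, hult⟩
  have hmin' : ∀ w ∈ after i N π', π'.symm u ≤ π'.symm w := by
    intro w hw
    obtain ⟨hwN, hwgt⟩ := Finset.mem_filter.mp hw
    by_cases hwu : w = u
    · subst hwu; exact le_refl _
    · have hwi : w ≠ i := ne_i hi hwN
      have hsw : π'.symm w = π.symm w := by
        rw [hs, Equiv.swap_apply_of_ne_of_ne hwi hwu]
      rw [hsw, hπ'u]
      by_contra hcon
      push_neg at hcon
      have hwb : w ∈ before i N π := Finset.mem_filter.mpr ⟨hwN, hcon⟩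
      have := hmax w hwb
      rw [hsw, hπ'i] at hwgt
      exact absurd hwgt (not_lt.mpr this)
  rw [fwd_char i N π' u hu' hmin', hπ', ← mul_assoc, Equiv.swap_mul_self, one_mul]

lemma card_before_add_card_after (i : Fin k) (N : Finset (Fin k)) (hi : i ∉ N)
    (π : Equiv.Perm (Fin k)) : (before i N π).card + (after i N π).card = N.card := by
  have h : after i N π = N.filter (fun u => ¬ π.symm u < π.symm i) := by
    apply Finset.filter_congr
    intro u hu
    have hne : π.symm u ≠ π.symm i := fun h => (ne_i hi hu) (π.symm.injective h)
    simp only [eq_iff_iff, not_lt]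
    exact ⟨le_of_lt, fun h => lt_of_le_of_ne h (Ne.symm hne)⟩
  rw [before, h, Finset.card_filter_add_card_filter_not]

lemma cnt_swap {i : Fin k} {N : Finset (Fin k)} (hi : i ∉ N) {u v : Fin k}
    (hu : u ∈ N) (hv : v ∈ N) (π : Equiv.Perm (Fin k)) :
    cnt i N (Equiv.swap u v * π) = cnt i N π := by
  have hs : ∀ w, (Equiv.swap u v * π).symm w = π.symm (Equiv.swap u v w) := by
    intro w; rw [symm_mul, Equiv.symm_swap]
  have hsi : (Equiv.swap u v * π).symm i = π.symm i := by
    rw [hs, Equiv.swap_apply_of_ne_of_ne (Ne.symm (ne_i hi hu)) (Ne.symm (ne_i hi hv))]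
  have hmapN : ∀ a, a ∈ N → Equiv.swap u v a ∈ N := by
    intro a ha
    by_cases h1 : a = u
    · subst h1; rw [Equiv.swap_apply_left]; exact hv
    by_cases h2 : a = v
    · subst h2; rw [Equiv.swap_apply_right]; exact hu
    · rw [Equiv.swap_apply_of_ne_of_ne h1 h2]; exact ha
  have hswi : Equiv.swap u v i = i :=
    Equiv.swap_apply_of_ne_of_ne (Ne.symm (ne_i hi hu)) (Ne.symm (ne_i hi hv))
  unfold cnt before
  simp only [hs, hswi]
  refine Finset.card_nbij' (Equiv.swap u v) (Equiv.swap u v) ?_ ?_ ?_ ?_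
  · intro a ha
    rw [Finset.mem_coe, Finset.mem_filter] at ha ⊢
    exact ⟨hmapN a ha.1, ha.2⟩
  · intro a ha
    rw [Finset.mem_coe, Finset.mem_filter] at ha ⊢
    refine ⟨hmapN a ha.1, ?_⟩
    rw [Equiv.swap_apply_self]
    exact ha.2
  · intro a _; exact Equiv.swap_apply_self u v a
  · intro a _; exact Equiv.swap_apply_self u v a

lemma cardA_eq {i : Fin k} {N : Finset (Fin k)} (hi : i ∉ N) {u v : Fin k}
    (hu : u ∈ N) (hv : v ∈ N) (r : ℕ) :
    (Finset.univ.filter (fun π : Equiv.Perm (Fin k) =>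
        cnt i N π = r ∧ π.symm u < π.symm i)).card
    = (Finset.univ.filter (fun π : Equiv.Perm (Fin k) =>
        cnt i N π = r ∧ π.symm v < π.symm i)).card := by
  have hs : ∀ (π : Equiv.Perm (Fin k)) (w : Fin k),
      (Equiv.swap u v * π).symm w = π.symm (Equiv.swap u v w) := by
    intro π w; rw [symm_mul, Equiv.symm_swap]
  have hsi : ∀ π : Equiv.Perm (Fin k), (Equiv.swap u v * π).symm i = π.symm i := by
    intro π
    rw [hs, Equiv.swap_apply_of_ne_of_ne (Ne.symm (ne_i hi hu)) (Ne.symm (ne_i hi hv))]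
  have hcancel : ∀ π : Equiv.Perm (Fin k), Equiv.swap u v * (Equiv.swap u v * π) = π := by
    intro π; rw [← mul_assoc, Equiv.swap_mul_self, one_mul]
  refine Finset.card_nbij' (fun π => Equiv.swap u v * π) (fun π => Equiv.swap u v * π)
    ?_ ?_ (fun a _ => hcancel a) (fun a _ => hcancel a)
  · intro π hπ
    rw [Finset.mem_coe, Finset.mem_filter] at hπ ⊢
    refine ⟨Finset.mem_univ _, cnt_swap hi hu hv π ▸ hπ.2.1, ?_⟩
    rw [hs, Equiv.swap_apply_right, hsi]
    exact hπ.2.2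
  · intro π hπ
    rw [Finset.mem_coe, Finset.mem_filter] at hπ ⊢
    refine ⟨Finset.mem_univ _, cnt_swap hi hu hv π ▸ hπ.2.1, ?_⟩
    rw [hs, Equiv.swap_apply_left, hsi]
    exact hπ.2.2

lemma sum_count (i : Fin k) (N : Finset (Fin k)) (r : ℕ) :
    ∑ u ∈ N, (Finset.univ.filter (fun π : Equiv.Perm (Fin k) =>
        cnt i N π = r ∧ π.symm u < π.symm i)).card
    = r * (Finset.univ.filter (fun π : Equiv.Perm (Fin k) => cnt i N π = r)).card := by
  have h1 : ∀ u, (Finset.univ.filter (fun π : Equiv.Perm (Fin k) =>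
      cnt i N π = r ∧ π.symm u < π.symm i)).card
      = ∑ π : Equiv.Perm (Fin k), if cnt i N π = r ∧ π.symm u < π.symm i then 1 else 0 := by
    intro u; rw [Finset.card_filter]
  simp only [h1]
  rw [Finset.sum_comm]
  have h2 : ∀ π : Equiv.Perm (Fin k),
      (∑ u ∈ N, if cnt i N π = r ∧ π.symm u < π.symm i then 1 else 0)
      = if cnt i N π = r then r else 0 := by
    intro π
    by_cases hc : cnt i N π = r
    · simp only [hc, true_and, if_true]
      rw [← Finset.card_filter]
      exact hc ▸ rfl
    · simp [hc]
  simp only [h2]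
  rw [Finset.sum_ite, Finset.sum_const, Finset.sum_const_zero, add_zero, smul_eq_mul, mul_comm]

lemma step (i : Fin k) (N : Finset (Fin k)) (hi : i ∉ N) {r : ℕ} (hr : r < N.card) :
    (Finset.univ.filter fun π : Equiv.Perm (Fin k) => cnt i N π = r).card
    = (Finset.univ.filter fun π : Equiv.Perm (Fin k) => cnt i N π = r + 1).card := by
  have hafter : ∀ π : Equiv.Perm (Fin k), cnt i N π = r → (after i N π).Nonempty := by
    intro π hc
    rw [← Finset.card_pos]
    have h1 := card_before_add_card_after i N hi π
    have hc' : (before i N π).card = r := hc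
    omega
  have hbefore : ∀ π : Equiv.Perm (Fin k), cnt i N π = r + 1 → (before i N π).Nonempty := by
    intro π hc
    rw [← Finset.card_pos]
    have hc' : (before i N π).card = r + 1 := hc
    omega
  refine Finset.card_nbij' (fwd i N) (bwd i N) ?_ ?_ ?_ ?_
  · intro π hπ
    simp only [Finset.mem_coe, Finset.mem_filter, Finset.mem_univ, true_and] at hπ ⊢
    rw [cnt_fwd hi (hafter π hπ), hπ]
  · intro π hπ
    simp only [Finset.mem_coe, Finset.mem_filter, Finset.mem_univ, true_and] at hπ ⊢
    have := cnt_bwd hi (hbefore π hπ)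
    omega
  · intro π hπ
    simp only [Finset.mem_coe, Finset.mem_filter, Finset.mem_univ, true_and] at hπ
    exact bwd_fwd hi (hafter π hπ)
  · intro π hπ
    simp only [Finset.mem_coe, Finset.mem_filter, Finset.mem_univ, true_and] at hπ
    exact fwd_bwd hi (hbefore π hπ)

lemma B_const (i : Fin k) (N : Finset (Fin k)) (hi : i ∉ N) :
    ∀ r, r ≤ N.card →
      (Finset.univ.filter fun π : Equiv.Perm (Fin k) => cnt i N π = r).card
      = (Finset.univ.filter fun π : Equiv.Perm (Fin k) => cnt i N π = 0).card := by
  intro r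
  induction r with
  | zero => intro _; rfl
  | succ n ih =>
    intro h
    rw [← step i N hi (show n < N.card by omega)]
    exact ih (by omega)

lemma B_total (i : Fin k) (N : Finset (Fin k)) (hi : i ∉ N) :
    (N.card + 1) * (Finset.univ.filter fun π : Equiv.Perm (Fin k) => cnt i N π = 0).card
      = Nat.factorial k := by
  have hmem : ∀ π : Equiv.Perm (Fin k), π ∈ (Finset.univ : Finset (Equiv.Perm (Fin k))) →
      cnt i N π ∈ Finset.range (N.card + 1) := by
    intro π _
    rw [Finset.mem_range]
    have : (before i N π).card ≤ N.card := Finset.card_le_card (Finset.filter_subset _ _)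
    have hc : cnt i N π = (before i N π).card := rfl
    omega
  have h := Finset.card_eq_sum_card_fiberwise hmem
  have h2 : (Finset.univ : Finset (Equiv.Perm (Fin k))).card = Nat.factorial k := by
    simp [Finset.card_univ, Fintype.card_perm, Fintype.card_fin]
  rw [h2] at h
  rw [h]
  rw [Finset.sum_congr rfl (fun x hx => B_const i N hi x (by
    rw [Finset.mem_range] at hx; omega))]
  rw [Finset.sum_const, Finset.card_range, smul_eq_mul]


end DagarAux

open DagarAux in
/-- For a vertex `i` of degree `nᵢ ≥ 1` and a fixed neighbour `j` of `i`, and each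
`r ∈ {1,…,nᵢ}`, the number of permutations `π` such that exactly `r` neighbours of `i`
precede `i`, with `j` among them, equals `r·k!/(nᵢ(nᵢ+1))`. -/
theorem dagar_perm_count_one {k : ℕ} (G : SimpleGraph (Fin k)) [DecidableRel G.Adj]
    (i j : Fin k) (hj : G.Adj i j) (r : ℕ) (hr1 : 1 ≤ r) (hr2 : r ≤ G.degree i) :
    (Finset.univ.filter (fun π : Equiv.Perm (Fin k) =>
        ((G.neighborFinset i).filter (fun u => π.symm u < π.symm i)).card = r ∧
          π.symm j < π.symm i)).card
      = r * Nat.factorial k / (G.degree i * (G.degree i + 1)) := by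
  set N := G.neighborFinset i with hN
  have hiN : i ∉ N := by simp [hN]
  have hjN : j ∈ N := by simp [hN, hj]
  have hNc : N.card = G.degree i := G.card_neighborFinset_eq_degree i
  have hgoal : (Finset.univ.filter (fun π : Equiv.Perm (Fin k) =>
        (N.filter (fun u => π.symm u < π.symm i)).card = r ∧ π.symm j < π.symm i))
      = (Finset.univ.filter (fun π : Equiv.Perm (Fin k) =>
        cnt i N π = r ∧ π.symm j < π.symm i)) := rfl
  rw [hgoal]
  set A := (Finset.univ.filter (fun π : Equiv.Perm (Fin k) =>
        cnt i N π = r ∧ π.symm j < π.symm i)).card with hA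
  set B := (Finset.univ.filter (fun π : Equiv.Perm (Fin k) => cnt i N π = r)).card with hB
  have h1 : N.card * A = r * B := by
    rw [← sum_count i N r]
    rw [Finset.sum_congr rfl (fun u hu => cardA_eq hiN hu hjN r)]
    rw [Finset.sum_const, smul_eq_mul]
  have h2 : (N.card + 1) * B = Nat.factorial k := by
    rw [hB, B_const i N hiN r (by omega)]
    exact B_total i N hiN
  have hn1 : 1 ≤ N.card := by omega
  have h3 : r * Nat.factorial k = A * (G.degree i * (G.degree i + 1)) := by
    rw [← hNc]
    calc r * Nat.factorial k = r * ((N.card + 1) * B) := by rw [h2]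
      _ = (N.card + 1) * (r * B) := by ring
      _ = (N.card + 1) * (N.card * A) := by rw [h1]
      _ = A * (N.card * (N.card + 1)) := by ring
  have hpos : 0 < G.degree i * (G.degree i + 1) := by
    have : 1 ≤ G.degree i := le_trans hr1 hr2
    positivity
  exact (Nat.div_eq_of_eq_mul_left hpos h3).symm
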